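/- (Increment-to-gap ratio bound for Maurey's recursion.) Fix 0 < ε < 1/2 and let φ_n be Maurey's sequence on 𝕋^ℕ. Then for every n ≥ 2 and every w ∈ 𝕋^ℕ, |φ_n(w) − φ_{n−1}(w)| ≤ 2ε (1 − |φ_{n−1}(w)|)(1 − |φ_n(w)|). -/

import Mathlib

open MeasureTheory Function
open scoped ENNReal NNReal

noncomputable section

instance : Fact (0 < 2 * Real.pi) := ⟨by positivity⟩

/-- The circle `𝕋`, realized as the additive circle `ℝ / 2πℤ`. -/
abbrev Torus : Type := AddCircle (2 * Real.pi)

/-- The normalized Haar probability measure `m` on the circle `𝕋`. -/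
abbrev haarT : Measure Torus := AddCircle.haarAddCircle

/-- The canonical identification of `𝕋` with the unit circle in `ℂ`. -/
noncomputable def toC (ζ : Torus) : ℂ := (AddCircle.toCircle ζ : ℂ)

/-- `H¹₀(𝕋, X)`: Bochner-integrable `X`-valued functions on `𝕋` all of whose Fourier coefficients
`ĥ(n)`, `n ≤ 0`, vanish. -/
def MemH1Zero {X : Type} [NormedAddCommGroup X] [NormedSpace ℂ X] (h : Torus → X) : Prop :=
  Integrable h haarT ∧ ∀ n : ℤ, n ≤ 0 → fourierCoeff h n = 0

/-- The countable torus product `𝕋^ℕ`. -/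
abbrev TorusProd : Type := ℕ → Torus

/-- The normalized Haar probability measure `ℙ` on `𝕋^ℕ` (the product Haar measure). -/
noncomputable def haarTP : Measure TorusProd := MeasureTheory.Measure.addHaarMeasure ⊤

instance : IsProbabilityMeasure haarTP :=
  IsProbabilityMeasure.mk (MeasureTheory.Measure.addHaarMeasure_self (K₀ := ⊤))

/-- The filtration `(ℱ_n)` on `𝕋^ℕ` where `ℱ_n` is generated by the first `n` coordinates. -/
noncomputable def coordFiltration : Filtration ℕ (inferInstance : MeasurableSpace TorusProd) where
  seq n := MeasurableSpace.comap (fun w : TorusProd => fun i : Fin n => w i) inferInstance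
  mono' := by
    intro m n hmn
    have h : (fun w : TorusProd => fun i : Fin m => w i)
        = (fun (x : Fin n → Torus) (i : Fin m) => x (Fin.castLE hmn i))
            ∘ (fun w : TorusProd => fun i : Fin n => w i) := rfl
    simp only []
    rw [h, ← MeasurableSpace.comap_comp]
    exact MeasurableSpace.comap_mono
      ((measurable_pi_lambda _ fun i => measurable_pi_apply _).comap_le)
  le' := fun n => (measurable_pi_lambda _ fun i => measurable_pi_apply _).comap_le

/-- An `X`-valued Hardy martingale on `𝕋^ℕ`: a martingale `F` with respect to the coordinate
filtration with `F 0 = 0` such that for each `k ≥ 1` and almost every `w`, the function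
`y ↦ F_k(w_1, …, w_{k-1}, y) - F_{k-1}(w)` of the `k`-th coordinate belongs to `H¹₀(𝕋, X)`. -/
def IsHardyMartingale {X : Type} [NormedAddCommGroup X] [NormedSpace ℂ X] [CompleteSpace X]
    (F : ℕ → TorusProd → X) : Prop :=
  Martingale F coordFiltration haarTP ∧ F 0 = 0 ∧
  ∀ k : ℕ, 0 < k → ∀ᵐ w ∂haarTP,
    MemH1Zero (fun y : Torus => F k (Function.update w (k - 1) y) - F (k - 1) w)


/-- **Maurey's sequence** `φ_n` on `𝕋^ℕ`, defined recursively by `φ_0 = 0`,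
`φ_{n+1}(w) = φ_n(w) + ε (1 - |φ_n(w)|)² w_{n+1}` (coordinates indexed from `0`,
so that `φ_n` depends on the first `n` coordinates); in particular `φ_1(w) = ε w_1`. -/
noncomputable def maureySeq (ε : ℝ) : ℕ → TorusProd → ℂ
  | 0 => fun _ => 0
  | n + 1 => fun w =>
      maureySeq ε n w + (ε * (1 - ‖maureySeq ε n w‖) ^ 2) • toC (w n)


lemma maurey_abs_bounds (ε : ℝ) (hε0 : 0 < ε) (hε : ε < 1 / 2) (n : ℕ) (w : TorusProd) :
    ‖maureySeq ε n w‖ < 1 := by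
  induction n with
  | zero => simp [maureySeq]
  | succ n ih =>
    have h0 : (0:ℝ) ≤ ‖maureySeq ε n w‖ := norm_nonneg _
    have habs : ‖maureySeq ε (n+1) w‖
        ≤ ‖maureySeq ε n w‖
          + ε * (1 - ‖maureySeq ε n w‖) ^ 2 := by
      calc ‖maureySeq ε (n+1) w‖
          ≤ ‖maureySeq ε n w‖
            + ‖(ε * (1 - ‖maureySeq ε n w‖) ^ 2) • toC (w n)‖ :=
            norm_add_le _ _
        _ = ‖maureySeq ε n w‖
            + |ε * (1 - ‖maureySeq ε n w‖) ^ 2| * 1 := by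
            rw [Complex.real_smul, norm_mul, Complex.norm_real, Real.norm_eq_abs]
            norm_num [toC, Circle.norm_coe]
        _ = ‖maureySeq ε n w‖
            + ε * (1 - ‖maureySeq ε n w‖) ^ 2 := by
            rw [abs_of_nonneg (by positivity)]; ring
    nlinarith [sq_nonneg (1 - ‖maureySeq ε n w‖)]

/-- **Increment-to-gap ratio bound for Maurey's recursion.** For `0 < ε < 1/2` and `n ≥ 2`,
`|φ_n(w) - φ_{n-1}(w)| ≤ 2ε (1 - |φ_{n-1}(w)|)(1 - |φ_n(w)|)`. -/
theorem maurey_increment_to_gap_bound (ε : ℝ) (hε0 : 0 < ε) (hε : ε < 1 / 2) :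
    ∀ n : ℕ, 2 ≤ n → ∀ w : TorusProd,
      ‖maureySeq ε n w - maureySeq ε (n - 1) w‖
        ≤ 2 * ε * ((1 - ‖maureySeq ε (n - 1) w‖)
            * (1 - ‖maureySeq ε n w‖)) := by
  intro n hn w
  obtain ⟨m, rfl⟩ : ∃ m, n = m + 1 := ⟨n - 1, (Nat.succ_pred_eq_of_pos (by omega)).symm⟩
  simp only [Nat.add_sub_cancel]
  set a := ‖maureySeq ε m w‖ with ha
  set b := ‖maureySeq ε (m+1) w‖ with hb
  have ha1 : a < 1 := maurey_abs_bounds ε hε0 hε m w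
  have hb1 : b < 1 := maurey_abs_bounds ε hε0 hε (m+1) w
  have h0 : (0:ℝ) ≤ a := norm_nonneg _
  have hinc : ‖maureySeq ε (m+1) w - maureySeq ε m w‖ = ε * (1 - a) ^ 2 := by
    show ‖maureySeq ε m w + _ - maureySeq ε m w‖ = _
    rw [add_sub_cancel_left, Complex.real_smul, norm_mul, Complex.norm_real, Real.norm_eq_abs,
      abs_of_nonneg (by positivity)]
    norm_num [toC, Circle.norm_coe, ha]
  have hble : b ≤ a + ε * (1 - a) ^ 2 := by
    have : ‖maureySeq ε (m+1) w‖
        ≤ ‖maureySeq ε m w‖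
          + ‖maureySeq ε (m+1) w - maureySeq ε m w‖ := by
      have := norm_add_le (maureySeq ε m w)
        (maureySeq ε (m+1) w - maureySeq ε m w)
      simpa using this
    rw [hinc] at this
    exact this
  rw [hinc]
  have hA : (0:ℝ) ≤ 2 * ε * (1 - a) := by
    have := sub_nonneg.2 ha1.le; positivity
  have h4 : (0:ℝ) ≤ 1 - 2 * ε * (1 - a) := by nlinarith
  have h3 : ε * (1 - a) ^ 2 ≤ 2 * ε * (1 - a) * ((1 - a) - ε * (1 - a) ^ 2) := by
    nlinarith [mul_nonneg (mul_nonneg hε0.le (sq_nonneg (1 - a))) h4]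
  have h2 : (1 - a) - ε * (1 - a) ^ 2 ≤ 1 - b := by linarith
  calc ε * (1 - a) ^ 2 ≤ 2 * ε * (1 - a) * ((1 - a) - ε * (1 - a) ^ 2) := h3
    _ ≤ 2 * ε * (1 - a) * (1 - b) := mul_le_mul_of_nonneg_left h2 hA
    _ = 2 * ε * ((1 - a) * (1 - b)) := by ring


end
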